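/- Let q be a prime power, n > 1, and let r be a prime dividing q^n − 1 that does not divide q^i − 1 for any 1 ≤ i < n. Then SL_n(F_q) contains an element g of order r that acts irreducibly on F_q^n, i.e., the only g-invariant F_q-subspaces of F_q^n are 0 and F_q^n. -/

import Mathlib

open Polynomial Module

/-- If `r` is a primitive prime divisor of `q^n - 1`, then `SL_n(F_q)` contains an
irreducible element of order `r`. -/
theorem SL_contains_irreducible_element_of_order (p m q n : ℕ) (hp : p.Prime) (hm : 0 < m)
    (hq : q = p ^ m) (hn : 1 < n)
    (F : Type*) [Field F] [Fintype F] (hF : Fintype.card F = q)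
    (r : ℕ) (hr : r.Prime) (hdvd : r ∣ q ^ n - 1)
    (hprim : ∀ i : ℕ, 1 ≤ i → i < n → ¬ r ∣ q ^ i - 1) :
    ∃ g : Matrix.SpecialLinearGroup (Fin n) F, orderOf g = r ∧
      ∀ U : Submodule F (Fin n → F),
        (∀ v ∈ U, (g : Matrix (Fin n) (Fin n) F).mulVec v ∈ U) → U = ⊥ ∨ U = ⊤ := by
  classical
  haveI : Fact p.Prime := ⟨hp⟩
  haveI : Fact r.Prime := ⟨hr⟩
  have hq1 : 1 < q := by
    rw [hq]; exact Nat.one_lt_pow hm.ne' hp.one_lt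
  have hrq1 : ¬ r ∣ q - 1 := by simpa using hprim 1 le_rfl hn
  have hmn : m * n ≠ 0 := by positivity
  set K := GaloisField p (m * n) with hKdef
  haveI : Fintype K := Fintype.ofFinite K
  have hcardK : Fintype.card K = q ^ n := by
    have h := GaloisField.card p (m * n) hmn
    rw [Nat.card_eq_fintype_card] at h
    rw [h, hq, ← pow_mul]
  -- `F` has characteristic `p`
  haveI hcharF : CharP F p := by
    rcases CharP.exists F with ⟨c, hc⟩
    haveI := hc
    have hcp : c.Prime := CharP.char_is_prime F c
    rcases FiniteField.card F c with ⟨k, hk⟩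
    have : p ∣ c ^ (k : ℕ) := by
      rw [← hk.2, hF, hq]
      exact dvd_pow_self p hm.ne'
    have : p = c := (Nat.prime_dvd_prime_iff_eq hp hcp).mp (hp.dvd_of_dvd_pow this)
    rwa [this]
  haveI : Algebra (ZMod p) F := ZMod.algebra F p
  haveI : IsSplittingField (ZMod p) F (X ^ p ^ m - X) :=
    FiniteField.isSplittingField_of_card_eq _ _ (hF.trans hq)
  -- the polynomial `X ^ p ^ m - X` splits in `K`
  have hpoly_dvd : (X ^ p ^ m - X : (ZMod p)[X]) ∣ X ^ p ^ (m * n) - X := by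
    have h1 : p ^ m - 1 ∣ p ^ (m * n) - 1 := by
      have := Nat.sub_dvd_pow_sub_pow (p ^ m) 1 n
      simpa [← pow_mul] using this
    obtain ⟨c, hc⟩ := h1
    have key : (X ^ (p ^ m - 1) - 1 : (ZMod p)[X]) ∣ X ^ (p ^ (m * n) - 1) - 1 := by
      rw [hc, pow_mul]
      simpa using sub_dvd_pow_sub_pow ((X : (ZMod p)[X]) ^ (p ^ m - 1)) 1 c
    have hle1 : 1 ≤ p ^ m := Nat.one_le_pow _ _ hp.pos
    have hle2 : 1 ≤ p ^ (m * n) := Nat.one_le_pow _ _ hp.pos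
    have e1 : (X ^ p ^ m - X : (ZMod p)[X]) = X * (X ^ (p ^ m - 1) - 1) := by
      rw [mul_sub, mul_one, ← pow_succ', Nat.sub_add_cancel hle1]
    have e2 : (X ^ p ^ (m * n) - X : (ZMod p)[X]) = X * (X ^ (p ^ (m * n) - 1) - 1) := by
      rw [mul_sub, mul_one, ← pow_succ', Nat.sub_add_cancel hle2]
    rw [e1, e2]
    exact mul_dvd_mul_left _ key
  have hsplits : Splits ((X ^ p ^ m - X : (ZMod p)[X]).map (algebraMap (ZMod p) K)) :=
    Polynomial.Splits.of_dvd
      (SplittingField.splits (X ^ p ^ (m * n) - X : (ZMod p)[X]))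
      ((Polynomial.map_ne_zero_iff (algebraMap (ZMod p) K).injective).mpr
        (FiniteField.X_pow_card_pow_sub_X_ne_zero _ hmn hp.one_lt))
      (Polynomial.map_dvd _ hpoly_dvd)
  -- embed `F` into `K`
  let ε : F →ₐ[ZMod p] K := IsSplittingField.lift F (X ^ p ^ m - X : (ZMod p)[X]) hsplits
  letI : Algebra F K := ε.toRingHom.toAlgebra
  haveI : FiniteDimensional F K := Module.Finite.of_finite
  have hfinrank : finrank F K = n := by
    have h := card_eq_pow_finrank (K := F) (V := K)
    rw [hcardK, hF] at h
    exact (Nat.pow_right_injective hq1 h).symm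
  -- an element of order `r` in `Kˣ`
  have hcardKu : r ∣ Fintype.card Kˣ := by
    rw [Fintype.card_units, hcardK]; exact hdvd
  obtain ⟨ζ, hζ⟩ := exists_prime_orderOf_dvd_card r hcardKu
  set u : K := (ζ : K) with hu
  have hu_pow : u ^ r = 1 := by
    have : ζ ^ r = 1 := by rw [← hζ]; exact pow_orderOf_eq_one ζ
    rw [hu, ← Units.val_pow_eq_pow_val, this, Units.val_one]
  have hu_ne1 : u ≠ 1 := by
    intro h
    have h1 : ζ = 1 := Units.ext h
    rw [h1, orderOf_one] at hζ
    exact hr.one_lt.ne hζ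
  have hu_ne0 : u ≠ 0 := ζ.ne_zero
  -- the matrix
  let b : Basis (Fin n) F K := (Module.finBasis F K).reindex (finCongr hfinrank)
  let M : Matrix (Fin n) (Fin n) F := Algebra.leftMulMatrix b u
  have hdet : M.det = 1 := by
    have hnorm : Algebra.norm F u = 1 := by
      set N := Algebra.norm F u with hN
      have h1 : N ^ r = 1 := by rw [hN, ← map_pow, hu_pow, map_one]
      have hN0 : N ≠ 0 := by
        intro h0
        rw [h0, zero_pow hr.ne_zero] at h1
        exact one_ne_zero h1.symm
      have h2 : N ^ (q - 1) = 1 := by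
        rw [← hF]; exact FiniteField.pow_card_sub_one_eq_one N hN0
      have d1 : orderOf N ∣ r := orderOf_dvd_of_pow_eq_one h1
      have d2 : orderOf N ∣ q - 1 := orderOf_dvd_of_pow_eq_one h2
      rcases hr.eq_one_or_self_of_dvd _ d1 with h | h
      · exact orderOf_eq_one_iff.mp h
      · exact absurd (h ▸ d2) hrq1
    rw [← hnorm, Algebra.norm_eq_matrix_det b]
  let g₀ : Matrix.SpecialLinearGroup (Fin n) F := ⟨M, hdet⟩
  refine ⟨g₀, ?_, ?_⟩
  · -- order is r
    have hpow : g₀ ^ r = 1 := by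
      apply Subtype.ext
      show M ^ r = _
      have : M ^ r = Algebra.leftMulMatrix b (u ^ r) := (map_pow _ _ _).symm
      rw [this, hu_pow, map_one]
      rfl
    have hne : g₀ ≠ 1 := by
      intro h
      have hM1 : M = 1 := congrArg Subtype.val h
      have hmv := Algebra.leftMulMatrix_mulVec_repr b u 1
      rw [show Algebra.leftMulMatrix b u = M from rfl, hM1, Matrix.one_mulVec, mul_one] at hmv
      have : (1 : K) = u := b.repr.injective (DFunLike.coe_injective hmv)
      exact hu_ne1 this.symm
    exact orderOf_eq_prime hpow hne
  · -- irreducibility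
    intro U hU
    set e : K ≃ₗ[F] (Fin n → F) := b.equivFun with he
    have key : ∀ x : K, e x ∈ U → e (u * x) ∈ U := by
      intro x hx
      have h := Algebra.leftMulMatrix_mulVec_repr b u x
      have h2 : M.mulVec (e x) = e (u * x) := by
        rw [he]; simpa [Basis.equivFun_apply] using h
      rw [← h2]
      exact hU _ hx
    by_cases hbot : ∀ x : K, e x ∈ U → x = 0
    · left
      rw [Submodule.eq_bot_iff]
      intro v hv
      have h1 : e (e.symm v) ∈ U := by rwa [e.apply_symm_apply]
      have h2 : e.symm v = 0 := hbot _ h1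
      have := congrArg e h2
      rwa [e.apply_symm_apply, map_zero] at this
    · right
      push_neg at hbot
      obtain ⟨x, hxU, hx0⟩ := hbot
      -- `F[u] = K`
      have hEtop : Algebra.adjoin F ({u} : Set K) = ⊤ := by
        have hint : IsIntegral F u := IsIntegral.of_finite F u
        have hts : (IntermediateField.adjoin F ({u} : Set K)).toSubalgebra
            = Algebra.adjoin F ({u} : Set K) :=
          IntermediateField.adjoin_simple_toSubalgebra_of_isAlgebraic hint.isAlgebraic
        set E := IntermediateField.adjoin F ({u} : Set K) with hE
        haveI : Fintype E := Fintype.ofFinite E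
        have hcardE : Fintype.card E = q ^ finrank F E := by
          rw [card_eq_pow_finrank (K := F) (V := E), hF]
        have hrE : r ∣ q ^ finrank F E - 1 := by
          have humem : u ∈ E := IntermediateField.mem_adjoin_simple_self F u
          set w : E := ⟨u, humem⟩ with hw
          have hw0 : w ≠ 0 := fun h => hu_ne0 (congrArg Subtype.val h)
          have hwu : IsUnit w := isUnit_iff_ne_zero.mpr hw0
          have hwr : w ^ r = 1 := by
            apply Subtype.ext
            show ((w ^ r : E) : K) = 1
            rw [SubmonoidClass.coe_pow]
            exact hu_pow
          have hw1 : w ≠ 1 := fun h => hu_ne1 (congrArg Subtype.val h)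
          have hordw : orderOf w = r := orderOf_eq_prime hwr hw1
          have hordw' : orderOf hwu.unit = r := by
            rw [← hordw, ← orderOf_units, IsUnit.unit_spec]
          have hdvdE : orderOf hwu.unit ∣ Fintype.card Eˣ := orderOf_dvd_card
          rwa [hordw', Fintype.card_units, hcardE] at hdvdE
        have hge : n ≤ finrank F E := by
          by_contra hlt
          push_neg at hlt
          have h1 : 1 ≤ finrank F E := finrank_pos
          exact hprim _ h1 hlt hrE
        have hle : finrank F E ≤ n := by
          have hcard_le : Fintype.card E ≤ Fintype.card K :=
            Fintype.card_le_of_injective _ Subtype.val_injective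
          rw [hcardE, hcardK] at hcard_le
          exact (Nat.pow_le_pow_iff_right hq1).mp hcard_le
        have hEfr : finrank F E = n := le_antisymm hle hge
        have hcards : Fintype.card E = Fintype.card K := by
          rw [hcardE, hcardK, hEfr]
        have hsurj : Function.Surjective (Subtype.val : E → K) :=
          ((Fintype.bijective_iff_injective_and_card _).mpr
            ⟨Subtype.val_injective, hcards⟩).surjective
        rw [eq_top_iff]
        intro y _
        rw [← hts]
        obtain ⟨z, hz⟩ := hsurj y
        exact (E.mem_toSubalgebra _).mpr (hz ▸ z.2)
      -- closure under multiplication by arbitrary elements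
      have hmul : ∀ y z : K, e z ∈ U → e (y * z) ∈ U := by
        intro y
        have hy : y ∈ Algebra.adjoin F ({u} : Set K) := hEtop ▸ Algebra.mem_top
        refine Algebra.adjoin_induction ?_ ?_ ?_ ?_ hy
        · rintro w hw z hz
          rw [Set.mem_singleton_iff] at hw
          subst hw
          exact key z hz
        · intro a z hz
          rw [← Algebra.smul_def, map_smul]
          exact U.smul_mem a hz
        · intro y1 y2 _ _ h1 h2 z hz
          rw [add_mul, map_add]
          exact U.add_mem (h1 z hz) (h2 z hz)
        · intro y1 y2 _ _ h1 h2 z hz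
          rw [mul_assoc]
          exact h1 _ (h2 z hz)
      rw [eq_top_iff]
      intro v _
      have h := hmul (e.symm v * x⁻¹) x hxU
      rwa [mul_assoc, inv_mul_cancel₀ hx0, mul_one, e.apply_symm_apply] at h
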